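/- Let W be a real d×m matrix with WᵀW positive definite, let r > 0, set c = tr((WᵀW)^{r/(r+1)}), and define Ω* = (WᵀW)^{1/(r+1)} / c^{1/r}. Then Ω* is symmetric positive definite, tr((Ω*)^r) = 1, and tr((Ω*)⁻¹ WᵀW) = c^{(r+1)/r}, so Ω* attains the infimum of tr(Ω⁻¹WᵀW) over symmetric positive definite Ω with tr(Ω^r) ≤ 1. -/

import Mathlib

open Matrix

/-- `Wᵀ * W` is Hermitian (symmetric) for a real matrix `W`. -/
lemma isHermitian_transpose_mul {d m : ℕ} (W : Matrix (Fin d) (Fin m) ℝ) :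
    (Wᵀ * W).IsHermitian := by
  simpa using W.isHermitian_conjTranspose_mul_self

/-- The singular values of a real `d × m` matrix `W`: the square roots of the
eigenvalues of the symmetric positive semidefinite matrix `Wᵀ * W`. -/
noncomputable def singVal {d m : ℕ} (W : Matrix (Fin d) (Fin m) ℝ) (i : Fin m) : ℝ :=
  Real.sqrt ((isHermitian_transpose_mul W).eigenvalues i)

/-- The real power `A ^ p` of a (symmetric) matrix, defined through the spectral
decomposition, i.e. by applying `t ↦ t ^ p` to the eigenvalues (continuous functional
calculus). -/
noncomputable def mpow {m : ℕ} (A : Matrix (Fin m) (Fin m) ℝ) (p : ℝ) :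
    Matrix (Fin m) (Fin m) ℝ :=
  cfc (fun t : ℝ => t ^ p) A
section Helpers

variable {m : ℕ}


variable {m : ℕ}

lemma contFin (f : ℝ → ℝ) {s : Set ℝ} (hs : s.Finite) : ContinuousOn f s := by
  have : Finite s := hs.to_subtype
  rw [continuousOn_iff_continuous_restrict]
  exact continuous_of_discreteTopology

lemma contOn (f : ℝ → ℝ) (A : Matrix (Fin m) (Fin m) ℝ) : ContinuousOn f (spectrum ℝ A) :=
  contFin f A.finite_real_spectrum

lemma cfc_eq_real {A : Matrix (Fin m) (Fin m) ℝ} (hA : A.IsHermitian) (f : ℝ → ℝ) :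
    cfc f A = (hA.eigenvectorUnitary : Matrix (Fin m) (Fin m) ℝ) * diagonal (f ∘ hA.eigenvalues) *
      (hA.eigenvectorUnitary : Matrix (Fin m) (Fin m) ℝ)ᴴ := by
  rw [hA.cfc_eq, Matrix.IsHermitian.cfc, Unitary.conjStarAlgAut_apply, star_eq_conjTranspose]
  congr! 2

lemma trace_cfc_real {A : Matrix (Fin m) (Fin m) ℝ} (hA : A.IsHermitian) (f : ℝ → ℝ) :
    (cfc f A).trace = ∑ i, f (hA.eigenvalues i) := by
  rw [cfc_eq_real hA, Matrix.trace_mul_cycle]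
  have h1 : (hA.eigenvectorUnitary : Matrix (Fin m) (Fin m) ℝ)ᴴ *
      (hA.eigenvectorUnitary : Matrix (Fin m) (Fin m) ℝ) = 1 := by
    rw [← star_eq_conjTranspose]
    exact Unitary.coe_star_mul_self hA.eigenvectorUnitary
  rw [h1, one_mul, trace_diagonal]
  rfl

lemma posDef_conj {D B : Matrix (Fin m) (Fin m) ℝ} (hD : D.PosDef) (hB : IsUnit B) :
    (B * D * Bᴴ).PosDef := by
  exact hD.mul_mul_conjTranspose_same (Matrix.vecMul_injective_iff_isUnit.mpr hB)

lemma spectrum_pos_of_posDef {A : Matrix (Fin m) (Fin m) ℝ} (hW : A.PosDef) :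
    ∀ x ∈ spectrum ℝ A, 0 < x := by
  rw [hW.isHermitian.spectrum_real_eq_range_eigenvalues]
  rintro x ⟨i, rfl⟩
  exact hW.eigenvalues_pos i

lemma isUnit_eigenvectorUnitary {A : Matrix (Fin m) (Fin m) ℝ} (hA : A.IsHermitian) :
    IsUnit (hA.eigenvectorUnitary : Matrix (Fin m) (Fin m) ℝ) :=
  ⟨⟨_, star (hA.eigenvectorUnitary : Matrix (Fin m) (Fin m) ℝ),
    Unitary.coe_mul_star_self hA.eigenvectorUnitary,
    Unitary.coe_star_mul_self hA.eigenvectorUnitary⟩, rfl⟩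

lemma posDef_cfc {A : Matrix (Fin m) (Fin m) ℝ} (hW : A.PosDef) (f : ℝ → ℝ)
    (hf : ∀ x ∈ spectrum ℝ A, 0 < f x) : (cfc f A).PosDef := by
  rw [cfc_eq_real hW.1]
  refine posDef_conj (Matrix.PosDef.diagonal fun i => ?_) (isUnit_eigenvectorUnitary hW.1)
  exact hf _ (hW.1.eigenvalues_mem_spectrum_real i)

lemma trace_diagonal_mul (d : Fin m → ℝ) (B : Matrix (Fin m) (Fin m) ℝ) :
    (diagonal d * B).trace = ∑ i, d i * B i i := by
  simp [Matrix.trace, Matrix.diag, Matrix.diagonal_mul]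

lemma trace_cfc_mul {Ω : Matrix (Fin m) (Fin m) ℝ} (hH : Ω.IsHermitian) (f : ℝ → ℝ)
    (A : Matrix (Fin m) (Fin m) ℝ) :
    (cfc f Ω * A).trace = ∑ i, f (hH.eigenvalues i) *
      (((hH.eigenvectorUnitary : Matrix (Fin m) (Fin m) ℝ)ᴴ * A *
        (hH.eigenvectorUnitary : Matrix (Fin m) (Fin m) ℝ)) i i) := by
  set U : Matrix (Fin m) (Fin m) ℝ := (hH.eigenvectorUnitary : Matrix (Fin m) (Fin m) ℝ)
  rw [cfc_eq_real hH, Matrix.trace_mul_cycle, Matrix.trace_mul_cycle]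
  rw [show Uᴴ * A * (U * diagonal (f ∘ hH.eigenvalues)) =
      (Uᴴ * A * U) * diagonal (f ∘ hH.eigenvalues) by simp [Matrix.mul_assoc],
    Matrix.trace_mul_comm, trace_diagonal_mul]
  rfl

lemma diag_conj_entry (U V : Matrix (Fin m) (Fin m) ℝ) (l : Fin m → ℝ) (i : Fin m) :
    (Uᴴ * (V * diagonal l * Vᴴ) * U) i i = ∑ j, ((Uᴴ * V) i j) ^ 2 * l j := by
  have h : Uᴴ * (V * diagonal l * Vᴴ) * U = (Uᴴ * V) * diagonal l * (Uᴴ * V)ᴴ := by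
    simp [conjTranspose_mul, Matrix.mul_assoc]
  rw [h]
  rw [Matrix.mul_apply]
  refine Finset.sum_congr rfl fun j _ => ?_
  rw [Matrix.mul_diagonal, conjTranspose_apply]
  simp [sq]
  ring

end Helpers

/-- with c = tr((WᵀW)^{r/(r+1)}) and Ω* = (WᵀW)^{1/(r+1)} / c^{1/r},
Ω* is symmetric positive definite, tr((Ω*)^r) = 1, tr((Ω*)⁻¹ WᵀW) = c^{(r+1)/r}, and
Ω* attains the infimum of tr(Ω⁻¹WᵀW) over symmetric positive definite Ω with
tr(Ω^r) ≤ 1. -/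
theorem stmt16 {d m : ℕ} (hm : 0 < m) (W : Matrix (Fin d) (Fin m) ℝ)
    (hW : (Wᵀ * W).PosDef) (r : ℝ) (hr : 0 < r)
    (c : ℝ) (hc : c = (mpow (Wᵀ * W) (r / (r + 1))).trace)
    (Ωstar : Matrix (Fin m) (Fin m) ℝ)
    (hΩstar : Ωstar = (c ^ (1 / r))⁻¹ • mpow (Wᵀ * W) (1 / (r + 1))) :
    Ωstar.PosDef ∧ (mpow Ωstar r).trace = 1 ∧
    (Ωstar⁻¹ * (Wᵀ * W)).trace = c ^ ((r + 1) / r) ∧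
    ∀ Ω : Matrix (Fin m) (Fin m) ℝ, Ω.PosDef → (mpow Ω r).trace ≤ 1 →
      (Ωstar⁻¹ * (Wᵀ * W)).trace ≤ (Ω⁻¹ * (Wᵀ * W)).trace := by
  set A := Wᵀ * W with hA_def
  have hA : A.IsHermitian := hW.1
  have hsa : IsSelfAdjoint A := hA
  have hr1 : (0:ℝ) < r + 1 := by linarith
  have hℓ : ∀ i, 0 < hA.eigenvalues i := hW.eigenvalues_pos
  have hspec := spectrum_pos_of_posDef hW
  have hcval : c = ∑ i, hA.eigenvalues i ^ (r / (r + 1)) := by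
    rw [hc, mpow, trace_cfc_real hA]
  have hcpos : 0 < c := by
    have : Nonempty (Fin m) := ⟨⟨0, hm⟩⟩
    rw [hcval]
    exact Finset.sum_pos (fun i _ => Real.rpow_pos_of_pos (hℓ i) _) Finset.univ_nonempty
  have hk : 0 < (c ^ (1 / r))⁻¹ := by positivity
  have hΩcfc : Ωstar = cfc (fun t : ℝ => (c ^ (1 / r))⁻¹ * t ^ (1 / (r + 1))) A := by
    rw [hΩstar, mpow, ← cfc_smul ((c ^ (1 / r))⁻¹) (fun t : ℝ => t ^ (1 / (r + 1))) A
      (contOn _ _)]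
    simp [smul_eq_mul]
  have hPD : Ωstar.PosDef := by
    rw [hΩcfc]
    exact posDef_cfc hW _ fun x hx => by
      have := hspec x hx
      positivity
  -- part 2
  have h2 : (mpow Ωstar r).trace = 1 := by
    rw [hΩcfc, mpow,
      ← cfc_comp (fun t : ℝ => t ^ r) (fun t : ℝ => (c ^ (1 / r))⁻¹ * t ^ (1 / (r + 1))) A hsa
        (contFin _ ((Matrix.finite_real_spectrum (A := A)).image _)) (contOn _ _),
      trace_cfc_real hA]
    have key : ∀ i, ((fun t : ℝ => t ^ r) ∘ fun t : ℝ => (c ^ (1 / r))⁻¹ * t ^ (1 / (r + 1)))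
        (hA.eigenvalues i) = c⁻¹ * hA.eigenvalues i ^ (r / (r + 1)) := by
      intro i
      simp only [Function.comp_apply]
      rw [Real.mul_rpow hk.le (Real.rpow_nonneg (hℓ i).le _),
        ← Real.rpow_mul (hℓ i).le,
        Real.inv_rpow (Real.rpow_nonneg hcpos.le _), ← Real.rpow_mul hcpos.le,
        one_div_mul_cancel hr.ne', Real.rpow_one,
        show 1 / (r + 1) * r = r / (r + 1) by ring]
    rw [Finset.sum_congr rfl fun i _ => key i, ← Finset.mul_sum, ← hcval,
      inv_mul_cancel₀ hcpos.ne']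
  -- part 3
  have hprod1 : cfc (fun t : ℝ => t ^ (-(1 / (r + 1)))) A * mpow A (1 / (r + 1)) = 1 := by
    rw [mpow, ← cfc_mul _ _ A (contOn _ _) (contOn _ _)]
    rw [show cfc (fun t : ℝ => t ^ (-(1 / (r + 1))) * t ^ (1 / (r + 1))) A
        = cfc (fun _ : ℝ => (1 : ℝ)) A from cfc_congr fun x hx => by
      rw [← Real.rpow_add (hspec x hx)]; simp]
    exact cfc_const_one ℝ A
  have hval : (Ωstar⁻¹ * A).trace = c ^ ((r + 1) / r) := by
    have hinv : Ωstar⁻¹ = (c ^ (1 / r)) • cfc (fun t : ℝ => t ^ (-(1 / (r + 1)))) A := by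
      apply Matrix.inv_eq_left_inv
      rw [hΩstar, smul_mul_smul_comm,
        mul_inv_cancel₀ (ne_of_gt (Real.rpow_pos_of_pos hcpos _)), hprod1, one_smul]
    have hmul : cfc (fun t : ℝ => t ^ (-(1 / (r + 1)))) A * A
        = cfc (fun t : ℝ => t ^ (r / (r + 1))) A := by
      have h1 := cfc_mul (fun t : ℝ => t ^ (-(1 / (r + 1)))) (fun t : ℝ => t) A
        (contOn _ _) (contOn _ _)
      rw [cfc_id' ℝ A] at h1
      rw [← h1]
      exact cfc_congr fun x hx => by
        nth_rewrite 2 [show x = x ^ (1 : ℝ) from (Real.rpow_one x).symm]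
        rw [← Real.rpow_add (hspec x hx), show -(1 / (r + 1)) + 1 = r / (r + 1) by field_simp; ring]
    rw [hinv, smul_mul_assoc, trace_smul, hmul, trace_cfc_real hA, smul_eq_mul, ← hcval,
      show (r + 1) / r = 1 / r + 1 by field_simp; ring,
      Real.rpow_add hcpos, Real.rpow_one]
  refine ⟨hPD, h2, hval, fun Ω hΩpd hΩtr => ?_⟩
  rw [hval]
  -- part 4 setup
  have hH : Ω.IsHermitian := hΩpd.1
  have hsΩ : IsSelfAdjoint Ω := hH
  have hω : ∀ i, 0 < hH.eigenvalues i := hΩpd.eigenvalues_pos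
  have hΩspec := spectrum_pos_of_posDef hΩpd
  set U : Matrix (Fin m) (Fin m) ℝ := (hH.eigenvectorUnitary : Matrix (Fin m) (Fin m) ℝ)
    with hUdef
  set V : Matrix (Fin m) (Fin m) ℝ := (hA.eigenvectorUnitary : Matrix (Fin m) (Fin m) ℝ)
    with hVdef
  set M : Matrix (Fin m) (Fin m) ℝ := Uᴴ * V with hMdef
  set ℓ : Fin m → ℝ := hA.eigenvalues with hldef
  set ω : Fin m → ℝ := hH.eigenvalues with hwdef
  set a : Fin m → ℝ := fun i => (Uᴴ * A * U) i i with haDef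
  have hinvΩ : Ω⁻¹ = cfc (fun t : ℝ => t⁻¹) Ω := by
    apply Matrix.inv_eq_left_inv
    have h1 := cfc_mul (fun t : ℝ => t⁻¹) (fun t : ℝ => t) Ω (contOn _ _) (contOn _ _)
    rw [cfc_id' ℝ Ω] at h1
    rw [← h1, show cfc (fun t : ℝ => t⁻¹ * t) Ω = cfc (fun _ : ℝ => (1:ℝ)) Ω from
      cfc_congr fun x hx => inv_mul_cancel₀ (ne_of_gt (hΩspec x hx))]
    exact cfc_const_one ℝ Ω
  have htr : (Ω⁻¹ * A).trace = ∑ i, (ω i)⁻¹ * a i := by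
    rw [hinvΩ]; exact trace_cfc_mul hH _ A
  have hBpsd : (Uᴴ * A * U).PosSemidef := by
    simpa using hW.posSemidef.mul_mul_conjTranspose_same Uᴴ
  have ha0 : ∀ i, 0 ≤ a i := fun i => hBpsd.diag_nonneg
  have hAdec : A = V * diagonal ℓ * Vᴴ := by
    have h0 := cfc_eq_real hA (fun x : ℝ => x)
    rw [cfc_id' ℝ A] at h0
    exact h0
  have ha_eq : ∀ i, a i = ∑ j, (M i j) ^ 2 * ℓ j := fun i => by
    calc a i = (Uᴴ * (V * diagonal ℓ * Vᴴ) * U) i i := by rw [← hAdec]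
    _ = ∑ j, (M i j) ^ 2 * ℓ j := diag_conj_entry U V ℓ i
  have hUU : Uᴴ * U = 1 := by
    rw [hUdef, ← star_eq_conjTranspose]; exact Unitary.coe_star_mul_self _
  have hUUc : U * Uᴴ = 1 := by
    rw [hUdef, ← star_eq_conjTranspose]; exact Unitary.coe_mul_star_self _
  have hVV : Vᴴ * V = 1 := by
    rw [hVdef, ← star_eq_conjTranspose]; exact Unitary.coe_star_mul_self _
  have hVVc : V * Vᴴ = 1 := by
    rw [hVdef, ← star_eq_conjTranspose]; exact Unitary.coe_mul_star_self _
  have hMM : M * Mᴴ = 1 := by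
    rw [hMdef, conjTranspose_mul, conjTranspose_conjTranspose]
    calc Uᴴ * V * (Vᴴ * U) = Uᴴ * (V * Vᴴ) * U := by simp [Matrix.mul_assoc]
    _ = 1 := by rw [hVVc, mul_one, hUU]
  have hMMc : Mᴴ * M = 1 := by
    rw [hMdef, conjTranspose_mul, conjTranspose_conjTranspose]
    calc Vᴴ * U * (Uᴴ * V) = Vᴴ * (U * Uᴴ) * V := by simp [Matrix.mul_assoc]
    _ = 1 := by rw [hUUc, mul_one, hVV]
  have hrow : ∀ i, ∑ j, (M i j) ^ 2 = 1 := fun i => by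
    have h1 := congrFun (congrFun hMM i) i
    simpa [Matrix.mul_apply, conjTranspose_apply, sq] using h1
  have hcol : ∀ j, ∑ i, (M i j) ^ 2 = 1 := fun j => by
    have h1 := congrFun (congrFun hMMc j) j
    simpa [Matrix.mul_apply, conjTranspose_apply, sq, mul_comm] using h1
  -- scalar estimates
  have hp1 : (1:ℝ) ≤ (r + 1) / r := by rw [le_div_iff₀ hr]; linarith
  have hStepA : ∀ i, ∑ j, (M i j) ^ 2 * ℓ j ^ (r / (r + 1)) ≤ a i ^ (r / (r + 1)) := by
    intro i
    have h := Real.arith_mean_le_rpow_mean Finset.univ (fun j => (M i j) ^ 2)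
      (fun j => ℓ j ^ (r / (r + 1))) (fun j _ => sq_nonneg _) (hrow i)
      (fun j _ => Real.rpow_nonneg (hℓ j).le _) hp1
    have hz : (∑ j, (M i j) ^ 2 * (ℓ j ^ (r / (r + 1))) ^ ((r + 1) / r))
        = ∑ j, (M i j) ^ 2 * ℓ j := by
      refine Finset.sum_congr rfl fun j _ => ?_
      rw [← Real.rpow_mul (hℓ j).le, show r / (r + 1) * ((r + 1) / r) = 1 by field_simp,
        Real.rpow_one]
    rw [hz, one_div_div, ← ha_eq i] at h
    exact h
  have hStepB : c ≤ ∑ i, a i ^ (r / (r + 1)) := by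
    have e1 : c = ∑ i, ∑ j, (M i j) ^ 2 * ℓ j ^ (r / (r + 1)) := by
      rw [hcval, Finset.sum_comm]
      refine Finset.sum_congr rfl fun j _ => ?_
      rw [← Finset.sum_mul, hcol j, one_mul]
    rw [e1]
    exact Finset.sum_le_sum fun i _ => hStepA i
  set T := (Ω⁻¹ * A).trace with hTdef
  have hT0 : 0 ≤ T := by
    rw [htr]
    exact Finset.sum_nonneg fun i _ => mul_nonneg (inv_nonneg.mpr (hω i).le) (ha0 i)
  have hconj : Real.HolderConjugate ((r + 1) / r) (r + 1) :=
    ⟨by rw [inv_div, inv_one, ← one_div, ← add_div, div_self hr1.ne'], by positivity, hr1⟩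
  have hHold := Real.inner_le_Lp_mul_Lq Finset.univ
    (fun i => (a i * (ω i)⁻¹) ^ (r / (r + 1))) (fun i => ω i ^ (r / (r + 1))) hconj
  have hfg : (∑ i, (a i * (ω i)⁻¹) ^ (r / (r + 1)) * ω i ^ (r / (r + 1)))
      = ∑ i, a i ^ (r / (r + 1)) := by
    refine Finset.sum_congr rfl fun i _ => ?_
    rw [← Real.mul_rpow (mul_nonneg (ha0 i) (inv_nonneg.mpr (hω i).le)) (hω i).le,
      inv_mul_cancel_right₀ (hω i).ne']
  have hfp : (∑ i, |(a i * (ω i)⁻¹) ^ (r / (r + 1))| ^ ((r + 1) / r))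
      = ∑ i, a i * (ω i)⁻¹ := by
    refine Finset.sum_congr rfl fun i _ => ?_
    have hn : 0 ≤ a i * (ω i)⁻¹ := mul_nonneg (ha0 i) (inv_nonneg.mpr (hω i).le)
    rw [abs_of_nonneg (Real.rpow_nonneg hn _), ← Real.rpow_mul hn,
      show r / (r + 1) * ((r + 1) / r) = 1 by field_simp, Real.rpow_one]
  have hgq : (∑ i, |ω i ^ (r / (r + 1))| ^ (r + 1)) = ∑ i, ω i ^ r := by
    refine Finset.sum_congr rfl fun i _ => ?_
    rw [abs_of_nonneg (Real.rpow_nonneg (hω i).le _), ← Real.rpow_mul (hω i).le,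
      div_mul_cancel₀ r hr1.ne']
  have hsumT : (∑ i, a i * (ω i)⁻¹) = T := by
    rw [htr]
    exact Finset.sum_congr rfl fun i _ => mul_comm _ _
  rw [hfg, hfp, hgq, hsumT, one_div_div] at hHold
  have h5 : (∑ i, ω i ^ r) ^ (1 / (r + 1)) ≤ 1 := by
    refine Real.rpow_le_one (Finset.sum_nonneg fun i _ => Real.rpow_nonneg (hω i).le _) ?_
      (by positivity)
    rw [mpow, trace_cfc_real hH] at hΩtr
    exact hΩtr
  have hchain : c ≤ T ^ (r / (r + 1)) := by
    calc c ≤ ∑ i, a i ^ (r / (r + 1)) := hStepB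
    _ ≤ T ^ (r / (r + 1)) * (∑ i, ω i ^ r) ^ (1 / (r + 1)) := hHold
    _ ≤ T ^ (r / (r + 1)) * 1 :=
        mul_le_mul_of_nonneg_left h5 (Real.rpow_nonneg hT0 _)
    _ = T ^ (r / (r + 1)) := mul_one _
  have hfinal := Real.rpow_le_rpow hcpos.le hchain (by positivity : (0:ℝ) ≤ (r + 1) / r)
  rw [← Real.rpow_mul hT0, show r / (r + 1) * ((r + 1) / r) = 1 by field_simp,
    Real.rpow_one] at hfinal
  exact hfinal
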